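/- Let T be a positive linear functional defined on a linear subspace of functions S → ℝ containing all convex functions, such that T(A) = (1/vol(S)) ∫_S A(x) dx for every affine function A : S → ℝ. Then for every convex function f : S → ℝ, f(p̄) ≤ T(f) ≤ (1/(n+1)) ∑ᵢ₌₀ⁿ f(pᵢ). -/

import Mathlib

open MeasureTheory Set

noncomputable def hhBasis {n : ℕ} (p : Fin (n + 1) → EuclideanSpace ℝ (Fin n))
    (hp : AffineIndependent ℝ p) : AffineBasis (Fin (n + 1)) ℝ (EuclideanSpace ℝ (Fin n)) :=
  ⟨p, hp, hp.affineSpan_eq_top_iff_card_eq_finrank_add_one.mpr (by simp)⟩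

theorem hh_integral_affine {n : ℕ} (p : Fin (n + 1) → EuclideanSpace ℝ (Fin n))
    (hp : AffineIndependent ℝ p) (S : Set (EuclideanSpace ℝ (Fin n)))
    (hS : S = convexHull ℝ (Set.range p))
    (A : EuclideanSpace ℝ (Fin n) →ᵃ[ℝ] ℝ) :
    ∫ x in S, A x = (volume S).toReal * (((n : ℝ) + 1)⁻¹ * ∑ i, A (p i)) := by
  classical
  set b := hhBasis p hp with hb
  have hbp : ⇑b = p := rfl
  have hcompact : IsCompact S := hS ▸ (Set.finite_range p).isCompact_convexHull ℝ
  have hmeas : MeasurableSet S := hcompact.isClosed.measurableSet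
  have hSint : (interior S).Nonempty := by
    rw [hS, ← hbp]
    exact ⟨_, b.centroid_mem_interior_convexHull⟩
  have hvolpos : 0 < volume S :=
    lt_of_lt_of_le (isOpen_interior.measure_pos volume hSint) (measure_mono interior_subset)
  have hvolfin : volume S < ⊤ := hcompact.measure_lt_top
  have htr : 0 < (volume S).toReal := ENNReal.toReal_pos hvolpos.ne' hvolfin.ne
  -- the permutation automorphisms
  set φ : Equiv.Perm (Fin (n + 1)) → (EuclideanSpace ℝ (Fin n) →ᵃ[ℝ] EuclideanSpace ℝ (Fin n)) :=
    fun σ => (Finset.univ.affineCombination ℝ (p ∘ σ)).comp b.coords with hφ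
  have coord_phi : ∀ σ x i, b.coord i (φ σ x) = b.coord (σ.symm i) x := by
    intro σ x i
    have hw1 : ∑ j, b.coords x j = 1 := b.sum_coord_apply_eq_one x
    have hw2 : ∑ j, b.coords x (σ.symm j) = 1 := by
      rw [Equiv.sum_comp σ.symm (b.coords x)]; exact hw1
    have h1 : φ σ x = Finset.univ.affineCombination ℝ p (fun j => b.coords x (σ.symm j)) := by
      show Finset.univ.affineCombination ℝ (p ∘ σ) (b.coords x) = _
      rw [Finset.affineCombination_eq_linear_combination _ _ _ hw1,
          Finset.affineCombination_eq_linear_combination _ _ _ hw2]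
      have := Equiv.sum_comp σ (fun j => b.coords x (σ.symm j) • p j)
      simpa using this
    rw [h1]
    have := b.coord_apply_combination_of_mem (Finset.mem_univ i)
      (w := fun j => b.coords x (σ.symm j)) hw2
    rw [hbp] at this
    rw [this]
    rfl
  have phi_vertex : ∀ σ (j : Fin (n + 1)), φ σ (p j) = p (σ j) := by
    intro σ j
    show Finset.univ.affineCombination ℝ (p ∘ σ) (b.coords (p j)) = p (σ j)
    have h0 : Finset.univ.affineCombination ℝ (p ∘ σ) (b.coords (p j)) = (p ∘ σ) j := by
      refine Finset.univ.affineCombination_of_eq_one_of_eq_zero _ _ (Finset.mem_univ j) ?_ ?_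
      · show b.coord j (p j) = 1
        rw [← hbp]; exact b.coord_apply_eq j
      · intro k _ hk
        show b.coord k (p j) = 0
        rw [← hbp]; exact b.coord_apply_ne hk
    exact h0
  have phi_image : ∀ σ, φ σ '' S = S := by
    intro σ
    rw [hS, AffineMap.image_convexHull, ← Set.range_comp]
    congr 1
    have h1 : ⇑(φ σ) ∘ p = p ∘ σ := funext fun j => phi_vertex σ j
    rw [h1]
    exact σ.surjective.range_comp p
  have phi_inj : ∀ σ, Function.Injective (φ σ) := by
    intro σ x y hxy
    apply b.ext_elem
    intro i
    have hx := coord_phi σ x (σ i)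
    have hy := coord_phi σ y (σ i)
    rw [Equiv.symm_apply_apply] at hx hy
    rw [← hx, ← hy, hxy]
  have phi_deriv : ∀ σ, ∀ x ∈ S, HasFDerivWithinAt (φ σ)
      ((φ σ).linear.toContinuousLinearMap) S x := by
    intro σ x _
    have h1 : ⇑(φ σ) = fun y => (φ σ).linear.toContinuousLinearMap y + (φ σ) 0 := by
      ext y
      conv_lhs => rw [AffineMap.decomp (φ σ)]
      simp
    rw [h1]
    exact (((φ σ).linear.toContinuousLinearMap.hasFDerivAt).add_const _).hasFDerivWithinAt
  have hchange0 : ∀ σ (g : EuclideanSpace ℝ (Fin n) → ℝ),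
      ∫ x in S, g x = ∫ x in S, |((φ σ).linear.toContinuousLinearMap).det| • g (φ σ x) := by
    intro σ g
    conv_lhs => rw [← phi_image σ]
    exact integral_image_eq_integral_abs_det_fderiv_smul volume hmeas (phi_deriv σ)
      ((phi_inj σ).injOn) g
  have det_one : ∀ σ, |((φ σ).linear.toContinuousLinearMap).det| = 1 := by
    intro σ
    have h1 := hchange0 σ (fun _ => (1 : ℝ))
    rw [setIntegral_const, setIntegral_const] at h1
    have h2 : (volume S).toReal = (volume S).toReal * |((φ σ).linear.toContinuousLinearMap).det| := by
      simpa [smul_eq_mul, mul_comm, measureReal_def] using h1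
    have h3 : (volume S).toReal * 1 = (volume S).toReal * |((φ σ).linear.toContinuousLinearMap).det| := by
      rw [mul_one]; exact h2
    exact (mul_left_cancel₀ htr.ne' h3).symm
  have hchange : ∀ σ (g : EuclideanSpace ℝ (Fin n) → ℝ),
      ∫ x in S, g x = ∫ x in S, g (φ σ x) := by
    intro σ g
    have := hchange0 σ g
    rw [det_one σ] at this
    simpa using this
  have hint : ∀ i, IntegrableOn (fun x => b.coord i x) S volume := by
    intro i
    exact ((b.coord i).continuous_of_finiteDimensional).continuousOn.integrableOn_compact hcompact
  have coordint : ∀ i j, (∫ x in S, b.coord i x) = ∫ x in S, b.coord j x := by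
    intro i j
    have h1 := hchange (Equiv.swap i j) (fun x => b.coord j x)
    have h2 : ∀ x, b.coord j (φ (Equiv.swap i j) x) = b.coord i x := by
      intro x
      rw [coord_phi]
      congr 1
      simp [Equiv.symm_swap, Equiv.swap_apply_right]
    calc (∫ x in S, b.coord i x) = ∫ x in S, b.coord j (φ (Equiv.swap i j) x) := by
          simp_rw [h2]
      _ = ∫ x in S, b.coord j x := (hchange _ _).symm
  have sumint : ∑ i, (∫ x in S, b.coord i x) = (volume S).toReal := by
    rw [← integral_finset_sum _ (fun i _ => hint i)]
    have : ∀ x, ∑ i, b.coord i x = (1 : ℝ) := fun x => b.sum_coord_apply_eq_one x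
    simp_rw [this]
    rw [setIntegral_const]
    simp [measureReal_def]
  have hne : ((n : ℝ) + 1) ≠ 0 := by positivity
  have each : ∀ i, (∫ x in S, b.coord i x) = (volume S).toReal * ((n : ℝ) + 1)⁻¹ := by
    intro i
    have h1 : ∑ j, (∫ x in S, b.coord j x) = ((n : ℝ) + 1) * ∫ x in S, b.coord i x := by
      rw [Finset.sum_congr rfl (fun j _ => coordint j i)]
      simp [Finset.sum_const, Finset.card_univ]
    rw [sumint] at h1
    field_simp
    linarith [h1]
  have hAexp : ∀ x, A x = ∑ i, b.coord i x * A (p i) := by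
    intro x
    conv_lhs => rw [← b.affineCombination_coord_eq_self x]
    rw [Finset.map_affineCombination _ _ _ (b.sum_coord_apply_eq_one x),
        Finset.affineCombination_eq_linear_combination _ _ _ (b.sum_coord_apply_eq_one x)]
    simp only [Function.comp_apply, AffineBasis.coords_apply, smul_eq_mul]
    rfl
  calc (∫ x in S, A x) = ∫ x in S, ∑ i, b.coord i x * A (p i) := setIntegral_congr_fun hmeas (fun x _ => hAexp x)
    _ = ∑ i, ∫ x in S, b.coord i x * A (p i) :=
        integral_finset_sum _ (fun i _ => (hint i).mul_const _)
    _ = ∑ i, (∫ x in S, b.coord i x) * A (p i) := by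
        refine Finset.sum_congr rfl (fun i _ => ?_)
        exact integral_mul_const _ _
    _ = ∑ i, (volume S).toReal * ((n : ℝ) + 1)⁻¹ * A (p i) := by
        refine Finset.sum_congr rfl (fun i _ => ?_)
        rw [each]
    _ = (volume S).toReal * (((n : ℝ) + 1)⁻¹ * ∑ i, A (p i)) := by
        rw [Finset.mul_sum, Finset.mul_sum]
        refine Finset.sum_congr rfl (fun i _ => by ring)

theorem hh_affine_pbar {n : ℕ} (p : Fin (n + 1) → EuclideanSpace ℝ (Fin n))
    (pbar : EuclideanSpace ℝ (Fin n)) (hpbar : pbar = ((n : ℝ) + 1)⁻¹ • ∑ i, p i)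
    (A : EuclideanSpace ℝ (Fin n) →ᵃ[ℝ] ℝ) :
    A pbar = ((n : ℝ) + 1)⁻¹ * ∑ i, A (p i) := by
  have hne : ((n : ℝ) + 1) ≠ 0 := by positivity
  have hw : ∑ _i : Fin (n + 1), ((n : ℝ) + 1)⁻¹ = 1 := by
    simp [Finset.sum_const, Finset.card_univ]
    field_simp
  have h1 : pbar = Finset.univ.affineCombination ℝ p (fun _ => ((n : ℝ) + 1)⁻¹) := by
    rw [Finset.affineCombination_eq_linear_combination _ _ _ hw, hpbar, Finset.smul_sum]
  rw [h1, Finset.map_affineCombination _ _ _ hw,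
      Finset.affineCombination_eq_linear_combination _ _ _ hw]
  rw [Finset.mul_sum]
  exact Finset.sum_congr rfl (fun i _ => by simp [smul_eq_mul])

theorem hermite_hadamard_functional {n : ℕ}
    (p : Fin (n + 1) → EuclideanSpace ℝ (Fin n)) (hp : AffineIndependent ℝ p)
    (S : Set (EuclideanSpace ℝ (Fin n))) (hS : S = convexHull ℝ (Set.range p))
    (pbar : EuclideanSpace ℝ (Fin n)) (hpbar : pbar = ((n : ℝ) + 1)⁻¹ • ∑ i, p i)
    (X : Submodule ℝ (EuclideanSpace ℝ (Fin n) → ℝ))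
    (hX : ∀ f : EuclideanSpace ℝ (Fin n) → ℝ, ConvexOn ℝ S f → f ∈ X)
    (T : X →ₗ[ℝ] ℝ)
    (Tpos : ∀ f g : X, (∀ x ∈ S, (f : EuclideanSpace ℝ (Fin n) → ℝ) x ≤ (g : EuclideanSpace ℝ (Fin n) → ℝ) x) → T f ≤ T g)
    (Taff : ∀ (A : EuclideanSpace ℝ (Fin n) →ᵃ[ℝ] ℝ) (hA : ⇑A ∈ X),
      T ⟨A, hA⟩ = ((volume S).toReal)⁻¹ * ∫ x in S, A x)
    (f : EuclideanSpace ℝ (Fin n) → ℝ) (hf : ConvexOn ℝ S f) :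
    f pbar ≤ T ⟨f, hX f hf⟩ ∧ T ⟨f, hX f hf⟩ ≤ ((n : ℝ) + 1)⁻¹ * ∑ i, f (p i) := by
  classical
  set b := hhBasis p hp with hb
  have hbp : ⇑b = p := rfl
  have hne : ((n : ℝ) + 1) ≠ 0 := by positivity
  have hconvS : Convex ℝ S := hS ▸ convex_convexHull ℝ _
  have hcompact : IsCompact S := hS ▸ (Set.finite_range p).isCompact_convexHull ℝ
  have pbar_int : pbar ∈ interior S := by
    have h1 : pbar = Finset.univ.centroid ℝ p := by
      rw [Finset.centroid_def,
        Finset.affineCombination_eq_linear_combination _ _ _ (Finset.sum_centroidWeights_eq_one_of_nonempty ℝ _ Finset.univ_nonempty)]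
      rw [hpbar, Finset.smul_sum]
      refine Finset.sum_congr rfl (fun i _ => ?_)
      rw [Finset.centroidWeights_apply]
      congr 1
      rw [Finset.card_univ, Fintype.card_fin]
      push_cast
      ring
    rw [h1, hS, ← hbp]
    exact b.centroid_mem_interior_convexHull
  have hvolpos : 0 < volume S :=
    lt_of_lt_of_le (isOpen_interior.measure_pos volume ⟨pbar, pbar_int⟩)
      (measure_mono interior_subset)
  have htr : 0 < (volume S).toReal :=
    ENNReal.toReal_pos hvolpos.ne' hcompact.measure_lt_top.ne
  have affconv : ∀ A : EuclideanSpace ℝ (Fin n) →ᵃ[ℝ] ℝ, ConvexOn ℝ S ⇑A := by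
    intro A
    refine ⟨hconvS, fun x _ y _ a c ha hc hac => ?_⟩
    rw [Convex.combo_affine_apply hac]
  have Tval : ∀ (A : EuclideanSpace ℝ (Fin n) →ᵃ[ℝ] ℝ) (hA : ⇑A ∈ X),
      T ⟨⇑A, hA⟩ = ((n : ℝ) + 1)⁻¹ * ∑ i, A (p i) := by
    intro A hA
    rw [Taff A hA, hh_integral_affine p hp S hS A, ← mul_assoc,
      inv_mul_cancel₀ htr.ne', one_mul]
  constructor
  · -- lower bound
    have hcont : ContinuousOn f (interior S) := hf.continuousOn_interior
    set U : Set (EuclideanSpace ℝ (Fin n) × ℝ) := {q | q.1 ∈ interior S ∧ f q.1 < q.2} with hU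
    have hUopen : IsOpen U := by
      have h1 : U = ((interior S) ×ˢ (Set.univ : Set ℝ)) ∩
          ((fun q : EuclideanSpace ℝ (Fin n) × ℝ => f q.1 - q.2) ⁻¹' Set.Iio 0) := by
        ext q
        simp only [hU, Set.mem_setOf_eq, Set.mem_inter_iff, Set.mem_prod, Set.mem_univ,
          and_true, Set.mem_preimage, Set.mem_Iio, sub_neg]
      rw [h1]
      refine ContinuousOn.isOpen_inter_preimage ?_ (isOpen_interior.prod isOpen_univ) isOpen_Iio
      exact (hcont.comp continuous_fst.continuousOn (fun q hq => hq.1)).sub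
        continuous_snd.continuousOn
    have hfint : ConvexOn ℝ (interior S) f :=
      hf.subset interior_subset hconvS.interior
    have hUconv : Convex ℝ U := by
      rintro ⟨x1, y1⟩ ⟨hx1, hy1⟩ ⟨x2, y2⟩ ⟨hx2, hy2⟩ a c ha hc hac
      refine ⟨hconvS.interior hx1 hx2 ha hc hac, ?_⟩
      have h2 : f (a • x1 + c • x2) ≤ a * f x1 + c * f x2 := hfint.2 hx1 hx2 ha hc hac
      have h3 : a * f x1 + c * f x2 < a * y1 + c * y2 := by
        rcases ha.eq_or_lt with h | h
        · have hc1 : c = 1 := by linarith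
          rw [← h, hc1]; simpa using hy2
        · have c1 : a * f x1 < a * y1 := mul_lt_mul_of_pos_left hy1 h
          have c2 : c * f x2 ≤ c * y2 := mul_le_mul_of_nonneg_left hy2.le hc
          linarith
      exact lt_of_le_of_lt h2 h3
    have hnotin : (pbar, f pbar) ∉ U := fun h => lt_irrefl _ h.2
    obtain ⟨l, hl⟩ := geometric_hahn_banach_open_point hUconv hUopen hnotin
    set g : EuclideanSpace ℝ (Fin n) → ℝ := fun x => l (x, 0) with hg
    set c : ℝ := l (0, 1) with hcdef
    have hlval : ∀ x y, l (x, y) = g x + y * c := by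
      intro x y
      have h1 : (x, y) = (x, (0 : ℝ)) +
          (y • ((0 : EuclideanSpace ℝ (Fin n)), (1 : ℝ))) := by
        simp [Prod.ext_iff]
      rw [h1, map_add, l.map_smul]
      simp [hg, hcdef, smul_eq_mul]
    have hU1 : ∀ x ∈ interior S, ∀ y, f x < y → g x + y * c < g pbar + f pbar * c := by
      intro x hx y hy
      have := hl (x, y) ⟨hx, hy⟩
      rwa [hlval, hlval] at this
    have hcneg : c < 0 := by
      have := hU1 pbar pbar_int (f pbar + 1) (by linarith)
      nlinarith
    have hkey : ∀ x ∈ interior S, g x + f x * c ≤ g pbar + f pbar * c := by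
      intro x hx
      have ht : Filter.Tendsto (fun y : ℝ => g x + y * c) (nhdsWithin (f x) (Set.Ioi (f x)))
          (nhds (g x + f x * c)) :=
        ((continuous_const.add (continuous_id.mul continuous_const)).tendsto (f x)).mono_left
          nhdsWithin_le_nhds
      exact le_of_tendsto ht (eventually_nhdsWithin_of_forall
        (fun y hy => (hU1 x hx y hy).le))
    set A : EuclideanSpace ℝ (Fin n) →ᵃ[ℝ] ℝ :=
      AffineMap.const ℝ (EuclideanSpace ℝ (Fin n)) (f pbar + g pbar * c⁻¹) +
        (-(c⁻¹)) • (((l.comp (ContinuousLinearMap.inl ℝ (EuclideanSpace ℝ (Fin n)) ℝ)) :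
          EuclideanSpace ℝ (Fin n) →ₗ[ℝ] ℝ).toAffineMap) with hA
    have hAx : ∀ x, A x = f pbar + g pbar * c⁻¹ - c⁻¹ * g x := by
      intro x
      simp [hA, hg]
      ring
    have hApbar : A pbar = f pbar := by
      rw [hAx]; ring
    have hAleint : ∀ x ∈ interior S, A x ≤ f x := by
      intro x hx
      have h5 : c⁻¹ < 0 := inv_lt_zero.mpr hcneg
      have h6 := mul_le_mul_of_nonpos_left (hkey x hx) h5.le
      have hcc : c⁻¹ * c = 1 := inv_mul_cancel₀ hcneg.ne
      have e1 : c⁻¹ * (g pbar + f pbar * c) = c⁻¹ * g pbar + f pbar := by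
        have h7 : c⁻¹ * (g pbar + f pbar * c) = c⁻¹ * g pbar + f pbar * (c⁻¹ * c) := by ring
        rw [h7, hcc, mul_one]
      have e2 : c⁻¹ * (g x + f x * c) = c⁻¹ * g x + f x := by
        have h7 : c⁻¹ * (g x + f x * c) = c⁻¹ * g x + f x * (c⁻¹ * c) := by ring
        rw [h7, hcc, mul_one]
      rw [e1, e2] at h6
      rw [hAx]
      linarith
    have hAle : ∀ x ∈ S, A x ≤ f x := by
      intro x hx
      have hzint : (2⁻¹ : ℝ) • pbar + (2⁻¹ : ℝ) • x ∈ interior S :=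
        hconvS.combo_interior_closure_mem_interior pbar_int (subset_closure hx)
          (by norm_num) (by norm_num) (by norm_num)
      have h8 : f ((2⁻¹ : ℝ) • pbar + (2⁻¹ : ℝ) • x) ≤ 2⁻¹ * f pbar + 2⁻¹ * f x := by
        have := hf.2 (interior_subset pbar_int) hx (by norm_num : (0:ℝ) ≤ 2⁻¹)
          (by norm_num : (0:ℝ) ≤ 2⁻¹) (by norm_num : (2⁻¹ : ℝ) + 2⁻¹ = 1)
        simpa [smul_eq_mul] using this
      have h9 : A ((2⁻¹ : ℝ) • pbar + (2⁻¹ : ℝ) • x) = 2⁻¹ * A pbar + 2⁻¹ * A x := by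
        rw [Convex.combo_affine_apply (by norm_num : (2⁻¹ : ℝ) + 2⁻¹ = 1)]
        simp [smul_eq_mul]
      have h7 := hAleint _ hzint
      rw [h9, hApbar] at h7
      linarith
    have hAX : ⇑A ∈ X := hX _ (affconv A)
    have step := Tpos ⟨⇑A, hAX⟩ ⟨f, hX f hf⟩ (fun x hx => hAle x hx)
    calc f pbar = A pbar := hApbar.symm
      _ = ((n : ℝ) + 1)⁻¹ * ∑ i, A (p i) := hh_affine_pbar p pbar hpbar A
      _ = T ⟨⇑A, hAX⟩ := (Tval A hAX).symm
      _ ≤ T ⟨f, hX f hf⟩ := step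
  · -- upper bound
    set B : EuclideanSpace ℝ (Fin n) →ᵃ[ℝ] ℝ :=
      (Finset.univ.affineCombination ℝ (fun i => f (p i))).comp b.coords with hB
    have hBx : ∀ x, B x = ∑ i, b.coord i x * f (p i) := by
      intro x
      show Finset.univ.affineCombination ℝ (fun i => f (p i)) (b.coords x) = _
      rw [Finset.affineCombination_eq_linear_combination Finset.univ (fun i => f (p i))
        (b.coords x) (b.sum_coord_apply_eq_one x)]
      exact Finset.sum_congr rfl (fun i _ => by simp [smul_eq_mul])
    have hBp : ∀ j, B (p j) = f (p j) := by
      intro j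
      show Finset.univ.affineCombination ℝ (fun i => f (p i)) (b.coords (p j)) = f (p j)
      refine Finset.univ.affineCombination_of_eq_one_of_eq_zero _ _ (Finset.mem_univ j) ?_ ?_
      · show b.coord j (p j) = 1
        rw [← hbp]; exact b.coord_apply_eq j
      · intro k _ hk
        show b.coord k (p j) = 0
        rw [← hbp]; exact b.coord_apply_ne hk
    have hfB : ∀ x ∈ S, f x ≤ B x := by
      intro x hx
      have hx0 : ∀ i, 0 ≤ b.coord i x := by
        have := hx
        rw [hS, ← hbp, b.convexHull_eq_nonneg_coord] at this
        exact this
      have hx1 : x = ∑ i, b.coord i x • p i := by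
        conv_lhs => rw [← b.affineCombination_coord_eq_self x]
        rw [Finset.affineCombination_eq_linear_combination Finset.univ ⇑b
          (fun i => b.coord i x) (b.sum_coord_apply_eq_one x)]
        rfl
      have hmem : ∀ i ∈ Finset.univ, p i ∈ S := fun i _ =>
        hS ▸ subset_convexHull ℝ _ (Set.mem_range_self i)
      have := hf.map_sum_le (fun i _ => hx0 i) (b.sum_coord_apply_eq_one x) hmem
      rw [hBx]
      calc f x = f (∑ i, b.coord i x • p i) := by rw [← hx1]
        _ ≤ ∑ i, b.coord i x • f (p i) := this
        _ = ∑ i, b.coord i x * f (p i) := by simp [smul_eq_mul]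
    have hBX : ⇑B ∈ X := hX _ (affconv B)
    have step := Tpos ⟨f, hX f hf⟩ ⟨⇑B, hBX⟩ (fun x hx => hfB x hx)
    calc T ⟨f, hX f hf⟩ ≤ T ⟨⇑B, hBX⟩ := step
      _ = ((n : ℝ) + 1)⁻¹ * ∑ i, B (p i) := Tval B hBX
      _ = ((n : ℝ) + 1)⁻¹ * ∑ i, f (p i) := by
          congr 1
          exact Finset.sum_congr rfl (fun i _ => hBp i)
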